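/- Let κ be an infinite cardinal. Assume that X is a T1 topological space such that every open cover of X has a subcover of size at most κ (i.e. ℓ(X) ≤ κ) and X has a point-2^κ base. Then the weight of X satisfies w(X) ≤ 2^κ. -/

import Mathlib

open Set Cardinal Topology

universe u v

/-- A space is quasi-Lindelöf if every open cover has a countable subcover
(no separation axioms assumed). -/
def QuasiLindelofSp (X : Type u) [TopologicalSpace X] : Prop :=
  ∀ 𝒰 : Set (Set X), (∀ U ∈ 𝒰, IsOpen U) → ⋃₀ 𝒰 = Set.univ →
    ∃ 𝒱 ⊆ 𝒰, 𝒱.Countable ∧ ⋃₀ 𝒱 = Set.univ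

/-- Lindelöf in the sense of Engelking: regular (T3, including T1) and
every open cover has a countable subcover. -/
def EngLindelofSp (X : Type u) [TopologicalSpace X] : Prop :=
  RegularSpace X ∧ T1Space X ∧ QuasiLindelofSp X

/-- X is productively Lindelöf if X × Y is Lindelöf for every Lindelöf space Y. -/
def ProductivelyLindelofSp (X : Type u) [TopologicalSpace X] : Prop :=
  ∀ (Y : Type u) [TopologicalSpace Y], EngLindelofSp Y → EngLindelofSp (X × Y)

/-- X is productively quasi-Lindelöf if X × Y is quasi-Lindelöf for every Lindelöf space Y. -/
def ProductivelyQuasiLindelofSp (X : Type u) [TopologicalSpace X] : Prop :=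
  ∀ (Y : Type u) [TopologicalSpace Y], EngLindelofSp Y → QuasiLindelofSp (X × Y)

/-- X is powerfully Lindelöf if X^ω is Lindelöf. -/
def PowerfullyLindelofSp (X : Type u) [TopologicalSpace X] : Prop :=
  EngLindelofSp (ℕ → X)

/-- X is powerfully quasi-Lindelöf if X^ω is quasi-Lindelöf. -/
def PowerfullyQuasiLindelofSp (X : Type u) [TopologicalSpace X] : Prop :=
  QuasiLindelofSp (ℕ → X)

/-- Tightness of X is at most κ. -/
def TightnessLE (X : Type u) [TopologicalSpace X] (κ : Cardinal.{u}) : Prop :=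
  ∀ (A : Set X) (x : X), x ∈ closure A → ∃ B ⊆ A, #B ≤ κ ∧ x ∈ closure B

/-- X has countable tightness. -/
def CountableTightness (X : Type u) [TopologicalSpace X] : Prop :=
  ∀ (A : Set X) (x : X), x ∈ closure A → ∃ B ⊆ A, B.Countable ∧ x ∈ closure B

/-- The Lindelöf number of X is at most κ: every open cover has a subcover of size ≤ κ. -/
def LindelofNumberLE (X : Type u) [TopologicalSpace X] (κ : Cardinal.{u}) : Prop :=
  ∀ 𝒰 : Set (Set X), (∀ U ∈ 𝒰, IsOpen U) → ⋃₀ 𝒰 = Set.univ →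
    ∃ 𝒱 ⊆ 𝒰, #𝒱 ≤ κ ∧ ⋃₀ 𝒱 = Set.univ

/-- The weight of X is at most κ: there is a base of size ≤ κ. -/
def WeightLE (X : Type u) [TopologicalSpace X] (κ : Cardinal.{u}) : Prop :=
  ∃ B : Set (Set X), TopologicalSpace.IsTopologicalBasis B ∧ #B ≤ κ

/-- N is a network for X. -/
def IsNetwork (X : Type u) [TopologicalSpace X] (N : Set (Set X)) : Prop :=
  ∀ (x : X) (U : Set X), IsOpen U → x ∈ U → ∃ n ∈ N, x ∈ n ∧ n ⊆ U

/-- X is linearly Lindelöf: regular (incl. T1) and every open cover linearly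
ordered by inclusion has a countable subcover. -/
def LinearlyLindelofSp (X : Type u) [TopologicalSpace X] : Prop :=
  RegularSpace X ∧ T1Space X ∧
    ∀ 𝒰 : Set (Set X), (∀ U ∈ 𝒰, IsOpen U) → IsChain (· ⊆ ·) 𝒰 → ⋃₀ 𝒰 = Set.univ →
      ∃ 𝒱 ⊆ 𝒰, 𝒱.Countable ∧ ⋃₀ 𝒱 = Set.univ

/-- U ⊆ X^ω is a basic open set: a product of open sets, all but finitely many of
which equal X. -/
def IsBasicOpen (X : Type u) [TopologicalSpace X] (U : Set (ℕ → X)) : Prop :=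
  ∃ V : ℕ → Set X, (∀ i, IsOpen (V i)) ∧ {i | V i ≠ Set.univ}.Finite ∧
    U = Set.pi Set.univ V

/-- A family of subsets of Z is point-κ if every point belongs to at most κ members. -/
def PointLE {Z : Type u} (𝒲 : Set (Set Z)) (κ : Cardinal.{u}) : Prop :=
  ∀ z : Z, #({W ∈ 𝒲 | z ∈ W}) ≤ κ

/-- A non-empty space is zero-dimensional if it is T1 and has a base of clopen sets. -/
def ZeroDimensionalSp (Y : Type u) [TopologicalSpace Y] : Prop :=
  Nonempty Y ∧ T1Space Y ∧
    ∃ B : Set (Set Y), TopologicalSpace.IsTopologicalBasis B ∧ ∀ b ∈ B, IsClopen b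


section Stmt16Aux

open Set Cardinal

/-- Counting helper: union of ≤ `#ι` sets each of size ≤ `c`. -/
private lemma mk_iUnion_le_of' {α ι : Type u} (f : ι → Set α) (c : Cardinal.{u})
    (h : ∀ i, #(f i) ≤ c) : #(⋃ i, f i) ≤ #ι * c := by
  rcases isEmpty_or_nonempty ι with hι | hι
  · simp [Set.iUnion_of_empty]
  · exact (Cardinal.mk_iUnion_le f).trans (mul_le_mul' le_rfl (ciSup_le' h))

/-- Transfinite iteration of a `step` operator along a well-ordered type. -/
private noncomputable def stage16 {X : Type u} {W : Type u} [LinearOrder W] [WellFoundedLT W]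
    (step : Set X → Set X) : W → Set X :=
  WellFounded.fix wellFounded_lt (fun w ih => step (⋃ w' : Set.Iio w, ih w'.1 w'.2))

private lemma stage16_eq {X W : Type u} [LinearOrder W] [WellFoundedLT W]
    (step : Set X → Set X) (w : W) :
    stage16 step w = step (⋃ w' : Set.Iio w, stage16 step w'.1) := by
  rw [stage16, WellFounded.fix_eq]

private lemma stage16_subset {X W : Type u} [LinearOrder W] [WellFoundedLT W]
    {step : Set X → Set X} (hstep : ∀ A, A ⊆ step A) {w₁ w₂ : W} (h : w₁ < w₂) :
    stage16 step w₁ ⊆ stage16 step w₂ := by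
  rw [stage16_eq step w₂]
  exact (Set.subset_iUnion (fun w' : Set.Iio w₂ => stage16 step w'.1) ⟨w₁, h⟩).trans
    (hstep _)

private lemma stage16_card {X W : Type u} [LinearOrder W] [WellFoundedLT W]
    {step : Set X → Set X} {lam : Cardinal.{u}} (hlam : ℵ₀ ≤ lam) (hW : #W ≤ lam)
    (hstep : ∀ A : Set X, #A ≤ lam → #(step A) ≤ lam) (w : W) :
    #(stage16 step w) ≤ lam := by
  induction w using WellFoundedLT.induction with
  | ind w ih =>
    rw [stage16_eq]
    refine hstep _ ?_
    calc #(⋃ w' : Set.Iio w, stage16 step w'.1)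
        ≤ #(Set.Iio w) * lam := mk_iUnion_le_of' _ _ (fun w' => ih w'.1 w'.2)
      _ ≤ lam * lam := mul_le_mul' ((Cardinal.mk_set_le _).trans hW) le_rfl
      _ = lam := Cardinal.mul_eq_self hlam

/-- A point-`lam` family of open sets with a dense set of size ≤ `lam` has size ≤ `lam`. -/
private lemma card_base_le_of_dense {X : Type u} [TopologicalSpace X]
    {B : Set (Set X)} (hB : ∀ b ∈ B, IsOpen b) {D : Set X} (hD : Dense D)
    {lam : Cardinal.{u}} (hlam : ℵ₀ ≤ lam) (hpt : PointLE B lam) (hDl : #D ≤ lam) :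
    #B ≤ lam := by
  have hsub : B ⊆ insert (∅ : Set X) (⋃ d : D, {b ∈ B | (d : X) ∈ b}) := by
    intro b hb
    rcases Set.eq_empty_or_nonempty b with rfl | hne
    · exact Set.mem_insert _ _
    · obtain ⟨x, hxb, hxD⟩ := hD.inter_open_nonempty b (hB b hb) hne
      exact Set.mem_insert_of_mem _ (Set.mem_iUnion.2 ⟨⟨x, hxD⟩, hb, hxb⟩)
  calc #B ≤ #((insert (∅ : Set X) (⋃ d : D, {b ∈ B | (d : X) ∈ b}) : Set (Set X))) :=
        Cardinal.mk_le_mk_of_subset hsub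
    _ ≤ #((⋃ d : D, {b ∈ B | (d : X) ∈ b} : Set (Set X))) + 1 := Cardinal.mk_insert_le
    _ ≤ #D * lam + 1 :=
        add_le_add (mk_iUnion_le_of' _ _ (fun d => hpt (d : X))) le_rfl
    _ ≤ lam * lam + lam := add_le_add (mul_le_mul' hDl le_rfl) (Cardinal.one_le_iff_ne_zero.2
        (by rintro rfl; exact (Cardinal.aleph0_pos.trans_le hlam).ne' rfl))
    _ = lam := by rw [Cardinal.mul_eq_self hlam, Cardinal.add_eq_self hlam]

end Stmt16Aux

/-- Let κ be infinite. Every T1 space with ℓ(X) ≤ κ and a point-2^κ base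
has weight at most 2^κ. -/
theorem stmt16 (X : Type u) [TopologicalSpace X] [T1Space X]
    (κ : Cardinal.{u}) (hκ : ℵ₀ ≤ κ)
    (hl : LindelofNumberLE X κ)
    (hbase : ∃ B : Set (Set X), TopologicalSpace.IsTopologicalBasis B ∧
      PointLE B (2 ^ κ)) :
    WeightLE X (2 ^ κ) := by
  classical
  obtain ⟨B, hB, hpt⟩ := hbase
  set lam := (2 : Cardinal.{u}) ^ κ with hlamdef
  have hκlam : κ ≤ lam := (Cardinal.cantor κ).le
  have hlam : ℵ₀ ≤ lam := hκ.trans hκlam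
  have hlamκ : lam ^ κ = lam := by
    rw [hlamdef, ← Cardinal.power_mul, Cardinal.mul_eq_self hκ]
  have hBopen : ∀ b ∈ B, IsOpen b := fun b hb => hB.isOpen hb
  rcases isEmpty_or_nonempty X with hX | hX
  · refine ⟨B, hB, (Cardinal.mk_set_le B).trans ?_⟩
    rw [Cardinal.mk_set]
    have : #X = 0 := Cardinal.mk_eq_zero X
    rw [this, Cardinal.power_zero]
    exact Cardinal.one_le_iff_ne_zero.2
      (by rintro h; exact (Cardinal.aleph0_pos.trans_le hlam).ne' h)
  suffices hD : ∃ D : Set X, Dense D ∧ #D ≤ lam by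
    obtain ⟨D, hDdense, hDcard⟩ := hD
    exact ⟨B, hB, card_base_le_of_dense hBopen hDdense hlam hpt hDcard⟩
  -- the witness function: picks a point outside the union of a family, if any
  let wit : Set (Set X) → X := fun 𝒲 =>
    if h : ((⋃₀ 𝒲)ᶜ : Set X).Nonempty then h.choose else Classical.arbitrary X
  have hwit : ∀ 𝒲 : Set (Set X), ((⋃₀ 𝒲)ᶜ : Set X).Nonempty → wit 𝒲 ∉ ⋃₀ 𝒲 := by
    intro 𝒲 h
    simp only [wit, dif_pos h]
    exact h.choose_spec
  -- families we close off against
  let P : Set X → Set (Set (Set X)) := fun A =>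
    {𝒲 | 𝒲 ⊆ B ∧ #𝒲 ≤ κ ∧ ∀ b ∈ 𝒲, (b ∩ A).Nonempty}
  let step : Set X → Set X := fun A => A ∪ wit '' P A
  have hstepext : ∀ A : Set X, A ⊆ step A := fun A => Set.subset_union_left
  have hstepcard : ∀ A : Set X, #A ≤ lam → #(step A) ≤ lam := by
    intro A hA
    have hBA : #({b ∈ B | (b ∩ A).Nonempty}) ≤ lam := by
      have hsub : {b ∈ B | (b ∩ A).Nonempty} ⊆ ⋃ a : A, {b ∈ B | (a : X) ∈ b} := by
        rintro b ⟨hbB, x, hxb, hxA⟩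
        exact Set.mem_iUnion.2 ⟨⟨x, hxA⟩, hbB, hxb⟩
      calc #({b ∈ B | (b ∩ A).Nonempty}) ≤ #(⋃ a : A, {b ∈ B | (a : X) ∈ b}) :=
            Cardinal.mk_le_mk_of_subset hsub
        _ ≤ #A * lam := mk_iUnion_le_of' _ _ (fun a => hpt (a : X))
        _ ≤ lam * lam := mul_le_mul' hA le_rfl
        _ = lam := Cardinal.mul_eq_self hlam
    have hP : #(P A) ≤ lam := by
      have hsub : P A ⊆ {𝒲 : Set (Set X) | 𝒲 ⊆ {b ∈ B | (b ∩ A).Nonempty} ∧ #𝒲 ≤ κ} := by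
        rintro 𝒲 ⟨h1, h2, h3⟩
        exact ⟨fun b hb => ⟨h1 hb, h3 b hb⟩, h2⟩
      have h2 := Cardinal.mk_bounded_subset_le {b ∈ B | (b ∩ A).Nonempty} κ
      refine (Cardinal.mk_le_mk_of_subset hsub).trans (le_trans h2 ?_)
      calc max #({b ∈ B | (b ∩ A).Nonempty}) ℵ₀ ^ κ ≤ lam ^ κ :=
            Cardinal.power_le_power_right (max_le hBA hlam)
        _ = lam := hlamκ
    calc #(step A) ≤ #A + #(wit '' P A) := Cardinal.mk_union_le _ _
      _ ≤ lam + lam := add_le_add hA (Cardinal.mk_image_le.trans hP)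
      _ = lam := Cardinal.add_eq_self hlam
  -- the closing-off along κ⁺
  let W := ((Order.succ κ).ord).ToType
  haveI hWO : IsWellOrder W (· < ·) :=
    isWellOrder_lt
  have hWcard : #W = Order.succ κ := by
    rw [Cardinal.mk_toType, Cardinal.card_ord]
  have hsucclam : Order.succ κ ≤ lam := Order.succ_le_of_lt (Cardinal.cantor κ)
  have hWlam : #W ≤ lam := hWcard.le.trans hsucclam
  let stage : W → Set X := stage16 step
  have hstagecard : ∀ w : W, #(stage w) ≤ lam := stage16_card hlam hWlam hstepcard
  let D : Set X := ⋃ w : W, stage w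
  have hDcard : #D ≤ lam := by
    calc #D ≤ #W * lam := mk_iUnion_le_of' _ _ hstagecard
      _ ≤ lam * lam := mul_le_mul' hWlam le_rfl
      _ = lam := Cardinal.mul_eq_self hlam
  -- key closure property of D
  have hclosure : ∀ 𝒲 : Set (Set X), 𝒲 ⊆ B → #𝒲 ≤ κ →
      (∀ b ∈ 𝒲, (b ∩ D).Nonempty) → ((⋃₀ 𝒲)ᶜ : Set X).Nonempty →
      ∃ y ∈ D, y ∉ ⋃₀ 𝒲 := by
    intro 𝒲 h𝒲B h𝒲κ h𝒲D hcompl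
    -- choose, for each b ∈ 𝒲, a stage that b meets
    have hchoice : ∀ b : 𝒲, ∃ w : W, ((b : Set X) ∩ stage w).Nonempty := by
      rintro ⟨b, hb⟩
      obtain ⟨x, hxb, hxD⟩ := h𝒲D b hb
      obtain ⟨w, hw⟩ := Set.mem_iUnion.1 hxD
      exact ⟨w, x, hxb, hw⟩
    choose f hf using hchoice
    -- the chosen stages are bounded since #𝒲 ≤ κ < cof(κ⁺)
    have hbounded : Set.Bounded (· < ·) (Set.range f) := by
      apply not_isCofinal_iff.1
      intro hc
      have h1 := Order.cof_le hc
      rw [show Order.cof W = _ from Ordinal.cof_toType _] at h1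
      have : (Order.succ κ).ord.cof = Order.succ κ :=
        (Cardinal.isRegular_succ hκ).cof_eq
      rw [this] at h1
      exact absurd h1 (not_le.2 (lt_of_le_of_lt (Cardinal.mk_range_le.trans h𝒲κ) (Order.lt_succ κ)))
    obtain ⟨w₀, hw₀⟩ := hbounded
    -- 𝒲 belongs to P of the union below w₀
    have hmem : 𝒲 ∈ P (⋃ w' : Set.Iio w₀, stage w'.1) := by
      refine ⟨h𝒲B, h𝒲κ, ?_⟩
      intro b hb
      obtain ⟨x, hxb, hxs⟩ := hf ⟨b, hb⟩
      exact ⟨x, hxb, Set.mem_iUnion.2 ⟨⟨f ⟨b, hb⟩, hw₀ _ (Set.mem_range_self _)⟩, hxs⟩⟩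
    have hwitD : wit 𝒲 ∈ D := by
      have : wit 𝒲 ∈ stage w₀ := by
        rw [show stage w₀ = stage16 step w₀ from rfl, stage16_eq]
        exact Set.mem_union_right _ (Set.mem_image_of_mem _ hmem)
      exact Set.mem_iUnion.2 ⟨w₀, this⟩
    exact ⟨wit 𝒲, hwitD, hwit 𝒲 hcompl⟩
  refine ⟨D, ?_, hDcard⟩
  -- D is dense
  intro x
  by_contra hx
  -- the open cover avoiding x on closure D
  set C := closure D with hC
  have hxC : x ∉ C := hx
  let 𝒰 : Set (Set X) := insert (Cᶜ) {b ∈ B | x ∉ b}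
  have h𝒰open : ∀ U ∈ 𝒰, IsOpen U := by
    rintro U (rfl | ⟨hUB, -⟩)
    · exact isClosed_closure.isOpen_compl
    · exact hBopen U hUB
  have h𝒰cover : ⋃₀ 𝒰 = Set.univ := by
    apply Set.eq_univ_iff_forall.2
    intro y
    by_cases hy : y ∈ C
    · have hyx : y ≠ x := fun h => hxC (h ▸ hy)
      obtain ⟨b, hbB, hyb, hbsub⟩ := hB.exists_subset_of_mem_open
        (show y ∈ ({x}ᶜ : Set X) from hyx) isOpen_compl_singleton
      exact ⟨b, Set.mem_insert_of_mem _ ⟨hbB, fun hxb => (hbsub hxb) rfl⟩, hyb⟩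
    · exact ⟨Cᶜ, Set.mem_insert _ _, hy⟩
  obtain ⟨𝒱, h𝒱𝒰, h𝒱κ, h𝒱cover⟩ := hl 𝒰 h𝒰open h𝒰cover
  let 𝒲 : Set (Set X) := {b ∈ 𝒱 | b ∈ B ∧ x ∉ b ∧ (b ∩ D).Nonempty}
  have h𝒲B : 𝒲 ⊆ B := fun b hb => hb.2.1
  have h𝒲κ : #𝒲 ≤ κ := (Cardinal.mk_le_mk_of_subset (Set.sep_subset _ _)).trans h𝒱κ
  have h𝒲D : ∀ b ∈ 𝒲, (b ∩ D).Nonempty := fun b hb => hb.2.2.2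
  have hDsub : D ⊆ ⋃₀ 𝒲 := by
    intro d hd
    have hdC : d ∈ C := subset_closure hd
    have : d ∈ ⋃₀ 𝒱 := h𝒱cover ▸ Set.mem_univ d
    obtain ⟨V, hV𝒱, hdV⟩ := this
    rcases h𝒱𝒰 hV𝒱 with rfl | ⟨hVB, hxV⟩
    · exact absurd hdC hdV
    · exact ⟨V, ⟨hV𝒱, hVB, hxV, ⟨d, hdV, hd⟩⟩, hdV⟩
  have hcompl : ((⋃₀ 𝒲)ᶜ : Set X).Nonempty := by
    refine ⟨x, ?_⟩
    rintro ⟨V, hV, hxV⟩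
    exact hV.2.2.1 hxV
  obtain ⟨y, hyD, hy𝒲⟩ := hclosure 𝒲 h𝒲B h𝒲κ h𝒲D hcompl
  exact hy𝒲 (hDsub hyD)
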